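/- Let F be a finite field, let 1 ≤ b < c, and let G be a b×c minimal-basic polynomial generator matrix of a convolutional code C with degree δ = Σ_i ν_i ≥ 1, and let d ∈ ℕ satisfy d_free(C) = d. Then T_{dfree}(C) ≤ (d − 1)·δ + 1; equivalently, for every u ∈ F[[z]]^b and j > 0 such that (u,j) determines an element of S_{dfree}, one has j ≤ (d − 1)·δ. -/

import Mathlib

open Polynomial Matrix

/-- The encoding map of a convolutional code with polynomial generator matrix `G`:
an information sequence `u ∈ F[[z]]^b` is mapped to the codeword `u · G ∈ F[[z]]^c`. -/
noncomputable def encode {F : Type*} [Field F] {b c : ℕ}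
    (G : Matrix (Fin b) (Fin c) (Polynomial F)) (u : Fin b → PowerSeries F) :
    Fin c → PowerSeries F :=
  fun j => ∑ i, u i * (G i j : PowerSeries F)

/-- Hamming weight of `v ∈ F[[z]]^c`: the extended-natural-number cardinality of the
set of pairs `(l, t)` such that `coeff_t (v_l) ≠ 0`. -/
noncomputable def wH {F : Type*} [Field F] {c : ℕ} (v : Fin c → PowerSeries F) : ℕ∞ :=
  {p : Fin c × ℕ | PowerSeries.coeff (R := F) p.2 (v p.1) ≠ 0}.encard

/-- Free distance of the convolutional code generated by `G`. -/
noncomputable def dfree {F : Type*} [Field F] {b c : ℕ}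
    (G : Matrix (Fin b) (Fin c) (Polynomial F)) : ℕ∞ :=
  sInf {w : ℕ∞ | ∃ v : Fin c → PowerSeries F,
    (∃ u : Fin b → PowerSeries F, v = encode G u) ∧ v ≠ 0 ∧ w = wH v}

/-- Total Hamming weight of segments `0, …, j-1` of `v`. -/
noncomputable def truncWeight {F : Type*} [Field F] {c : ℕ}
    (v : Fin c → PowerSeries F) (j : ℕ) : ℕ∞ :=
  {p : Fin c × ℕ | p.2 < j ∧ PowerSeries.coeff (R := F) p.2 (v p.1) ≠ 0}.encard

/-- `i`-th row degree of `G`: the maximum of the natural degrees of the entries of row `i`. -/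
def rowDeg {F : Type*} [Field F] {b c : ℕ}
    (G : Matrix (Fin b) (Fin c) (Polynomial F)) (i : Fin b) : ℕ :=
  Finset.univ.sup fun j => (G i j).natDegree

/-- Degree `δ` of `G`: the sum of its row degrees. -/
def degG {F : Type*} [Field F] {b c : ℕ}
    (G : Matrix (Fin b) (Fin c) (Polynomial F)) : ℕ :=
  ∑ i, rowDeg G i

/-- The controller-canonical encoder state `σ_t(u)` of `G` is nonzero: some component
`coeff_{t-s} (u_i)` with `1 ≤ s ≤ ν_i` (and `s ≤ t`, since coefficients with negative
index are taken to be `0`) is nonzero. -/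
def stateNonzero {F : Type*} [Field F] {b c : ℕ}
    (G : Matrix (Fin b) (Fin c) (Polynomial F)) (u : Fin b → PowerSeries F) (t : ℕ) : Prop :=
  ∃ i : Fin b, ∃ s : ℕ, 1 ≤ s ∧ s ≤ rowDeg G i ∧ s ≤ t ∧
    PowerSeries.coeff (R := F) (t - s) (u i) ≠ 0

/-- `G` is a generator matrix: it has rank `b` over the field of rational functions `F(z)`. -/
def IsGenerator {F : Type*} [Field F] {b c : ℕ}
    (G : Matrix (Fin b) (Fin c) (Polynomial F)) : Prop :=
  (G.map (algebraMap (Polynomial F) (RatFunc F))).rank = b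

/-- `G` is basic: it has a polynomial right inverse. -/
def IsBasic {F : Type*} [Field F] {b c : ℕ}
    (G : Matrix (Fin b) (Fin c) (Polynomial F)) : Prop :=
  ∃ H : Matrix (Fin c) (Fin b) (Polynomial F), G * H = 1

/-- The high-order coefficient matrix `[G]_h` of `G`. -/
def highOrder {F : Type*} [Field F] {b c : ℕ}
    (G : Matrix (Fin b) (Fin c) (Polynomial F)) : Matrix (Fin b) (Fin c) F :=
  fun i j => (G i j).coeff (rowDeg G i)

/-- `G` is minimal-basic: basic, and `[G]_h` has full row rank `b` over `F`. -/
def IsMinimalBasic {F : Type*} [Field F] {b c : ℕ}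
    (G : Matrix (Fin b) (Fin c) (Polynomial F)) : Prop :=
  IsBasic G ∧ (highOrder G).rank = b

/-- `(u, j)` determines an element of `S_{dfree}`: `j > 0`, the total Hamming weight of
segments `0, …, j-1` of `u·G` is strictly less than `d_free`, and `σ_t(u) ≠ 0` for all
`1 ≤ t ≤ j`. -/
def SdfreePair {F : Type*} [Field F] {b c : ℕ}
    (G : Matrix (Fin b) (Fin c) (Polynomial F)) (u : Fin b → PowerSeries F) (j : ℕ) : Prop :=
  0 < j ∧ truncWeight (encode G u) j < dfree G ∧
    ∀ t : ℕ, 1 ≤ t → t ≤ j → stateNonzero G u t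

namespace TDF
variable {F : Type*} [Field F] {b c : ℕ}


noncomputable def outF (G : Matrix (Fin b) (Fin c) (Polynomial F))
    (p : (∀ i : Fin b, Fin (rowDeg G i) → F) × (Fin b → F)) : Fin c → F :=
  fun l => ∑ i, (p.2 i * (G i l).coeff 0 +
    ∑ s : Fin (rowDeg G i), p.1 i s * (G i l).coeff ((s : ℕ) + 1))

def stepF (G : Matrix (Fin b) (Fin c) (Polynomial F))
    (p : (∀ i : Fin b, Fin (rowDeg G i) → F) × (Fin b → F)) :
    ∀ i : Fin b, Fin (rowDeg G i) → F :=
  fun i s => if (s : ℕ) = 0 then p.2 i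
    else p.1 i ⟨(s : ℕ) - 1, lt_of_le_of_lt (Nat.pred_le _) s.isLt⟩

noncomputable def outL (G : Matrix (Fin b) (Fin c) (Polynomial F)) :
    ((∀ i : Fin b, Fin (rowDeg G i) → F) × (Fin b → F)) →ₗ[F] (Fin c → F) :=
  IsLinearMap.mk' (outF G) <| by
    constructor
    · intro p q
      funext l
      simp only [outF, Prod.fst_add, Prod.snd_add, Pi.add_apply, add_mul,
        Finset.sum_add_distrib]
      ring
    · intro r p
      funext l
      simp only [outF, Prod.smul_fst, Prod.smul_snd, Pi.smul_apply, smul_eq_mul,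
        Finset.mul_sum, mul_add, mul_assoc]

noncomputable def stepL (G : Matrix (Fin b) (Fin c) (Polynomial F)) :
    ((∀ i : Fin b, Fin (rowDeg G i) → F) × (Fin b → F)) →ₗ[F]
      (∀ i : Fin b, Fin (rowDeg G i) → F) :=
  IsLinearMap.mk' (stepF G) <| by
    constructor
    · intro p q
      funext i s
      simp only [stepF, Prod.fst_add, Prod.snd_add, Pi.add_apply]
      split <;> rfl
    · intro r p
      funext i s
      simp only [stepF, Prod.smul_fst, Prod.smul_snd, Pi.smul_apply, smul_eq_mul]
      split <;> rfl

noncomputable def Wsub (G : Matrix (Fin b) (Fin c) (Polynomial F)) :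
    ℕ → Submodule F (∀ i : Fin b, Fin (rowDeg G i) → F)
  | 0 => ⊤
  | (k+1) => ((LinearMap.ker (outL G)) ⊓ ((Wsub G k).comap (stepL G))).map
      (LinearMap.fst F _ _)

theorem mem_Wsub_succ {G : Matrix (Fin b) (Fin c) (Polynomial F)}
    {σ : ∀ i : Fin b, Fin (rowDeg G i) → F} {k : ℕ} :
    σ ∈ Wsub G (k+1) ↔ ∃ a : Fin b → F,
      outF G (σ, a) = 0 ∧ stepF G (σ, a) ∈ Wsub G k := by
  constructor
  · rintro ⟨⟨τ, a⟩, ⟨h1, h2⟩, rfl⟩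
    exact ⟨a, h1, h2⟩
  · rintro ⟨a, h1, h2⟩
    exact ⟨(σ, a), ⟨h1, h2⟩, rfl⟩

/-- state of `u` at time `t`. -/
noncomputable def stateOf (G : Matrix (Fin b) (Fin c) (Polynomial F))
    (u : Fin b → PowerSeries F) (t : ℕ) : ∀ i : Fin b, Fin (rowDeg G i) → F :=
  fun i s => if (s : ℕ) + 1 ≤ t then PowerSeries.coeff (R := F) (t - ((s : ℕ) + 1)) (u i) else 0

theorem coeff_G_eq_zero {G : Matrix (Fin b) (Fin c) (Polynomial F)} {i : Fin b}
    (l : Fin c) {n : ℕ} (hn : rowDeg G i < n) : (G i l).coeff n = 0 := by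
  apply Polynomial.coeff_eq_zero_of_natDegree_lt
  exact lt_of_le_of_lt (Finset.le_sup (f := fun j => (G i j).natDegree) (Finset.mem_univ l)) hn

theorem coeff_encode_eq_out (G : Matrix (Fin b) (Fin c) (Polynomial F))
    (u : Fin b → PowerSeries F) (t : ℕ) (l : Fin c) :
    PowerSeries.coeff (R := F) t (encode G u l) =
      outF G (stateOf G u t, fun i => PowerSeries.coeff (R := F) t (u i)) l := by
  simp only [encode, map_sum, outF, stateOf]
  refine Finset.sum_congr rfl fun i _ => ?_
  set f : ℕ → F := fun q => (G i l).coeff q * PowerSeries.coeff (R := F) (t - q) (u i) with hf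
  set g : ℕ → F := fun s => if s + 1 ≤ t then f (s + 1) else 0 with hg
  have stepA : PowerSeries.coeff (R := F) t (u i * ((G i l : Polynomial F) : PowerSeries F)) =
      ∑ q ∈ Finset.range (t + 1), f q := by
    rw [mul_comm, PowerSeries.coeff_mul, Finset.Nat.sum_antidiagonal_eq_sum_range_succ
      (f := fun q r => (PowerSeries.coeff (R := F) q ((G i l : PowerSeries F))) *
        PowerSeries.coeff (R := F) r (u i))]
    refine Finset.sum_congr rfl fun q _ => ?_
    rw [hf]
    simp [Polynomial.coeff_coe]
  have stepB : ∑ q ∈ Finset.range (t + 1), f q =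
      f 0 + ∑ s ∈ Finset.range t, f (s + 1) := by
    rw [Finset.sum_range_succ']
    ring
  have stepC : ∑ s ∈ Finset.range t, f (s + 1) = ∑ s ∈ Finset.range t, g s := by
    refine Finset.sum_congr rfl fun s hs => ?_
    simp only [Finset.mem_range] at hs
    rw [hg]
    simp only []
    rw [if_pos (by omega)]
  have stepD : ∑ s ∈ Finset.range t, g s =
      ∑ s ∈ Finset.range (max t (rowDeg G i)), g s := by
    refine Finset.sum_subset (Finset.range_subset_range.2 (le_max_left _ _)) fun s _ hs => ?_
    simp only [Finset.mem_range, not_lt] at hs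
    rw [hg]
    simp only []
    rw [if_neg (by omega)]
  have stepE : ∑ s ∈ Finset.range (max t (rowDeg G i)), g s =
      ∑ s ∈ Finset.range (rowDeg G i), g s := by
    refine (Finset.sum_subset (Finset.range_subset_range.2 (le_max_right _ _))
      fun s _ hs => ?_).symm
    simp only [Finset.mem_range, not_lt] at hs
    have hz : f (s + 1) = 0 := by
      rw [hf]
      simp only []
      rw [coeff_G_eq_zero l (by omega), zero_mul]
    rw [hg]
    simp only []
    rw [hz]
    split <;> rfl
  have stepF : ∑ s ∈ Finset.range (rowDeg G i), g s =
      ∑ s : Fin (rowDeg G i),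
        (if (s : ℕ) + 1 ≤ t then PowerSeries.coeff (R := F) (t - ((s : ℕ) + 1)) (u i) else 0) *
          (G i l).coeff ((s : ℕ) + 1) := by
    rw [Fin.sum_univ_eq_sum_range
      (f := fun s => (if s + 1 ≤ t then
        PowerSeries.coeff (R := F) (t - (s + 1)) (u i) else 0) * (G i l).coeff (s + 1))]
    refine Finset.sum_congr rfl fun s _ => ?_
    rw [hg, hf]
    simp only []
    split <;> simp [mul_comm]
  rw [stepA, stepB, stepC, stepD, stepE, stepF, hf]
  simp only [Nat.sub_zero]
  ring

theorem stateOf_succ (G : Matrix (Fin b) (Fin c) (Polynomial F))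
    (u : Fin b → PowerSeries F) (t : ℕ) :
    stateOf G u (t + 1) =
      stepF G (stateOf G u t, fun i => PowerSeries.coeff (R := F) t (u i)) := by
  funext i s
  simp only [stateOf, stepF]
  by_cases h0 : (s : ℕ) = 0
  · rw [if_pos h0, if_pos (show (s : ℕ) + 1 ≤ t + 1 by omega)]
    have he : t + 1 - ((s : ℕ) + 1) = t := by omega
    rw [he]
  · rw [if_neg h0]
    have hs1 : (s : ℕ) - 1 + 1 = (s : ℕ) := by omega
    rw [hs1]
    by_cases h1 : (s : ℕ) + 1 ≤ t + 1
    · rw [if_pos h1, if_pos (show (s : ℕ) ≤ t by omega)]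
      have he : t + 1 - ((s : ℕ) + 1) = t - (s : ℕ) := by omega
      rw [he]
    · rw [if_neg h1, if_neg (by omega)]

theorem Wsub_antitone (G : Matrix (Fin b) (Fin c) (Polynomial F)) :
    ∀ k, Wsub G (k + 1) ≤ Wsub G k := by
  intro k
  induction k with
  | zero => exact le_top
  | succ k ih =>
    intro σ hσ
    rw [mem_Wsub_succ] at hσ ⊢
    obtain ⟨a, h1, h2⟩ := hσ
    exact ⟨a, h1, ih h2⟩

theorem mem_Wsub_of_zero_output (G : Matrix (Fin b) (Fin c) (Polynomial F))
    (u : Fin b → PowerSeries F) :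
    ∀ (k T : ℕ), (∀ m, m < k → ∀ l, PowerSeries.coeff (R := F) (T + m) (encode G u l) = 0) →
      stateOf G u T ∈ Wsub G k := by
  intro k
  induction k with
  | zero => intro T _; exact Submodule.mem_top
  | succ k ih =>
    intro T h
    rw [mem_Wsub_succ]
    refine ⟨fun i => PowerSeries.coeff (R := F) T (u i), ?_, ?_⟩
    · funext l
      rw [← coeff_encode_eq_out]
      simpa using h 0 (by omega) l
    · rw [← stateOf_succ]
      apply ih
      intro m hm l
      have := h (m + 1) (by omega) l
      rwa [show T + (m + 1) = T + 1 + m by omega] at this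
theorem vecMul_eq_zero_imp (M : Matrix (Fin b) (Fin c) F) (hrank : M.rank = b)
    (lam : Fin b → F) (h : lam ᵥ* M = 0) : lam = 0 := by
  have h1 : Module.finrank F (LinearMap.range (Mᵀ.mulVecLin)) = b := by
    have := Matrix.rank_transpose M
    rw [hrank] at this
    exact this
  have h2 : LinearMap.ker (Mᵀ.mulVecLin) = ⊥ := by
    have h3 := LinearMap.finrank_range_add_finrank_ker (Mᵀ.mulVecLin)
    rw [h1, Module.finrank_fin_fun] at h3
    have h4 : Module.finrank F (LinearMap.ker (Mᵀ.mulVecLin)) = 0 := by omega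
    exact Submodule.finrank_eq_zero.1 h4
  have h5 : Mᵀ.mulVecLin lam = 0 := by
    rw [Matrix.mulVecLin_apply, Matrix.mulVec_transpose, h]
  rw [← LinearMap.mem_ker, h2, Submodule.mem_bot] at h5
  exact h5

theorem pred_deg (G : Matrix (Fin b) (Fin c) (Polynomial F))
    (hrank : (highOrder G).rank = b) (Q : Fin b → Polynomial F) (D : ℕ)
    (hDge : ∀ i, Q i ≠ 0 → (Q i).natDegree + rowDeg G i ≤ D)
    (hex : ∃ i1, Q i1 ≠ 0 ∧ (Q i1).natDegree + rowDeg G i1 = D) :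
    ∃ l : Fin c, (∑ i, Q i * G i l).coeff D ≠ 0 := by
  classical
  obtain ⟨i1, hQ1, hi1⟩ := hex
  set lam : Fin b → F := fun i =>
    if Q i ≠ 0 ∧ (Q i).natDegree + rowDeg G i = D then (Q i).leadingCoeff else 0 with hlam
  have hcoeff : ∀ l, (∑ i, Q i * G i l).coeff D = (lam ᵥ* highOrder G) l := by
    intro l
    rw [Polynomial.finset_sum_coeff]
    simp only [Matrix.vecMul, dotProduct]
    refine Finset.sum_congr rfl fun i _ => ?_
    by_cases hQi : Q i = 0
    · simp [hQi, hlam]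
    · have hle : (Q i).natDegree + rowDeg G i ≤ D := hDge i hQi
      by_cases heq : (Q i).natDegree + rowDeg G i = D
      · have : (Q i * G i l).coeff D = (Q i).leadingCoeff * (G i l).coeff (rowDeg G i) := by
          rw [Polynomial.coeff_mul]
          rw [Finset.sum_eq_single ((Q i).natDegree, rowDeg G i)]
          · rfl
          · rintro ⟨p, q⟩ hmem hne2
            rw [Finset.HasAntidiagonal.mem_antidiagonal] at hmem
            by_cases hp : p < (Q i).natDegree
            · rw [coeff_G_eq_zero l (by omega), mul_zero]
            · by_cases hp2 : p = (Q i).natDegree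
              · exfalso; apply hne2; rw [hp2]; simp only [Prod.mk.injEq]
                exact ⟨trivial, by omega⟩
              · rw [Polynomial.coeff_eq_zero_of_natDegree_lt (by omega), zero_mul]
          · intro hnm
            exfalso
            exact hnm (Finset.HasAntidiagonal.mem_antidiagonal.2 heq)
        rw [this, hlam]
        simp only [highOrder]
        rw [if_pos ⟨hQi, heq⟩]
      · have hlt : (Q i * G i l).natDegree < D := by
          have := Polynomial.natDegree_mul_le (p := Q i) (q := G i l)
          have h2 : (G i l).natDegree ≤ rowDeg G i :=
            Finset.le_sup (f := fun j => (G i j).natDegree) (Finset.mem_univ l)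
          omega
        rw [Polynomial.coeff_eq_zero_of_natDegree_lt hlt, hlam]
        simp only []
        rw [if_neg (by tauto), zero_mul]
  by_contra hcon
  push_neg at hcon
  have hz : lam ᵥ* highOrder G = 0 := by
    funext l
    rw [← hcoeff l]
    exact hcon l
  have := vecMul_eq_zero_imp (highOrder G) hrank lam hz
  have hl1 : lam i1 = 0 := by rw [this]; rfl
  rw [hlam] at hl1
  simp only [] at hl1
  rw [if_pos ⟨hQ1, hi1⟩] at hl1
  exact hQ1 (Polynomial.leadingCoeff_eq_zero.1 hl1)

theorem encode_mul_H (G : Matrix (Fin b) (Fin c) (Polynomial F))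
    (H : Matrix (Fin c) (Fin b) (Polynomial F)) (hGH : G * H = 1)
    (u : Fin b → PowerSeries F) (i : Fin b) :
    ∑ l, encode G u l * ((H l i : Polynomial F) : PowerSeries F) = u i := by
  simp only [encode, Finset.sum_mul]
  rw [Finset.sum_comm]
  have : ∀ i' : Fin b, ∑ l, u i' * ((G i' l : Polynomial F) : PowerSeries F) *
      ((H l i : Polynomial F) : PowerSeries F) =
      u i' * (((G * H) i' i : Polynomial F) : PowerSeries F) := by
    intro i'
    rw [Matrix.mul_apply]
    have hcs : ((∑ j, G i' j * H j i : Polynomial F) : PowerSeries F) =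
        ∑ j, ((G i' j * H j i : Polynomial F) : PowerSeries F) := by
      rw [← Polynomial.coeToPowerSeries.ringHom_apply, map_sum]
      simp only [Polynomial.coeToPowerSeries.ringHom_apply]
    rw [hcs, Finset.mul_sum]
    refine Finset.sum_congr rfl fun l _ => ?_
    rw [Polynomial.coe_mul]
    ring
  rw [Finset.sum_congr rfl fun i' _ => this i']
  rw [hGH]
  have hone : ∀ i' : Fin b, (((1 : Matrix (Fin b) (Fin b) (Polynomial F)) i' i :
      Polynomial F) : PowerSeries F) = if i' = i then 1 else 0 := by
    intro i'
    rw [Matrix.one_apply]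
    split <;> simp
  rw [Finset.sum_congr rfl fun i' _ => by rw [hone i']]
  simp [Finset.sum_ite_eq']
theorem no_zero_tail (G : Matrix (Fin b) (Fin c) (Polynomial F))
    (H : Matrix (Fin c) (Fin b) (Polynomial F)) (hGH : G * H = 1)
    (hrank : (highOrder G).rank = b)
    (w : Fin b → PowerSeries F) (T : ℕ)
    (hout : ∀ t, T ≤ t → ∀ l, PowerSeries.coeff (R := F) t (encode G w l) = 0)
    (i0 : Fin b) (s : ℕ) (hs1 : 1 ≤ s) (hs2 : s ≤ rowDeg G i0) (hs3 : s ≤ T)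
    (hnz : PowerSeries.coeff (R := F) (T - s) (w i0) ≠ 0) : False := by
  classical
  set P : Fin c → Polynomial F := fun l => ∑ n ∈ Finset.range T,
    Polynomial.monomial n (PowerSeries.coeff (R := F) n (encode G w l)) with hPdef
  have hP : ∀ l, ((P l : Polynomial F) : PowerSeries F) = encode G w l := by
    intro l
    ext m
    rw [Polynomial.coeff_coe, hPdef]
    rw [Polynomial.finset_sum_coeff]
    simp only [Polynomial.coeff_monomial]
    rw [Finset.sum_ite_eq' (Finset.range T) m
      (fun n => PowerSeries.coeff (R := F) n (encode G w l))]
    split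
    · rfl
    · next h =>
      rw [Finset.mem_range, not_lt] at h
      exact (hout m h l).symm
  set Q : Fin b → Polynomial F := fun i => ∑ l, P l * H l i with hQdef
  have hQ : ∀ i, ((Q i : Polynomial F) : PowerSeries F) = w i := by
    intro i
    rw [hQdef]
    have hcs : ((∑ l, P l * H l i : Polynomial F) : PowerSeries F) =
        ∑ l, ((P l * H l i : Polynomial F) : PowerSeries F) := by
      rw [← Polynomial.coeToPowerSeries.ringHom_apply, map_sum]
      simp only [Polynomial.coeToPowerSeries.ringHom_apply]
    rw [hcs]
    simp only [Polynomial.coe_mul, hP]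
    exact encode_mul_H G H hGH w i
  have hQc : ∀ i n, (Q i).coeff n = PowerSeries.coeff (R := F) n (w i) := by
    intro i n
    rw [← hQ i, Polynomial.coeff_coe]
  have hQ0 : Q i0 ≠ 0 := by
    intro hcon
    apply hnz
    rw [← hQc, hcon, Polynomial.coeff_zero]
  set D := (Finset.univ.filter (fun i => Q i ≠ 0)).sup
    (fun i => (Q i).natDegree + rowDeg G i) with hDdef
  have hDge : ∀ i, Q i ≠ 0 → (Q i).natDegree + rowDeg G i ≤ D := fun i hi =>
    Finset.le_sup (f := fun i => (Q i).natDegree + rowDeg G i)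
      (Finset.mem_filter.2 ⟨Finset.mem_univ i, hi⟩)
  have hex : ∃ i1, Q i1 ≠ 0 ∧ (Q i1).natDegree + rowDeg G i1 = D := by
    obtain ⟨i1, hmem, heq⟩ := Finset.exists_mem_eq_sup
      (Finset.univ.filter (fun i => Q i ≠ 0))
      ⟨i0, Finset.mem_filter.2 ⟨Finset.mem_univ _, hQ0⟩⟩
      (fun i => (Q i).natDegree + rowDeg G i)
    exact ⟨i1, (Finset.mem_filter.1 hmem).2, heq.symm⟩
  have hDT : T ≤ D := by
    have h1 : T - s ≤ (Q i0).natDegree :=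
      Polynomial.le_natDegree_of_ne_zero (by rw [hQc]; exact hnz)
    have h2 := hDge i0 hQ0
    omega
  obtain ⟨l, hl⟩ := pred_deg G hrank Q D hDge hex
  apply hl
  have hcast : ((∑ i, Q i * G i l : Polynomial F) : PowerSeries F) = encode G w l := by
    have hcs : ((∑ i, Q i * G i l : Polynomial F) : PowerSeries F) =
        ∑ i, ((Q i * G i l : Polynomial F) : PowerSeries F) := by
      rw [← Polynomial.coeToPowerSeries.ringHom_apply, map_sum]
      simp only [Polynomial.coeToPowerSeries.ringHom_apply]
    rw [hcs]
    simp only [Polynomial.coe_mul, hQ]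
    rfl
  have := congrArg (PowerSeries.coeff (R := F) D) hcast
  rw [Polynomial.coeff_coe] at this
  rw [this]
  exact hout D hDT l

theorem rowDeg_le_degG (G : Matrix (Fin b) (Fin c) (Polynomial F)) (i : Fin b) :
    rowDeg G i ≤ degG G :=
  Finset.single_le_sum (f := fun i => rowDeg G i) (fun _ _ => Nat.zero_le _)
    (Finset.mem_univ i)

theorem Wsub_stab (G : Matrix (Fin b) (Fin c) (Polynomial F))
    (H : Matrix (Fin c) (Fin b) (Polynomial F)) (hGH : G * H = 1)
    (hrank : (highOrder G).rank = b) {k : ℕ}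
    (hstab : Wsub G (k + 1) = Wsub G k) : Wsub G k = ⊥ := by
  rw [Submodule.eq_bot_iff]
  intro σ hσ
  by_contra hσ0
  have hch : ∀ τ, τ ∈ Wsub G k →
      ∃ a, outF G (τ, a) = 0 ∧ stepF G (τ, a) ∈ Wsub G k := by
    intro τ hτ
    rw [← hstab] at hτ
    exact mem_Wsub_succ.1 hτ
  set seq : ℕ → {τ : ∀ i : Fin b, Fin (rowDeg G i) → F // τ ∈ Wsub G k} :=
    fun n => Nat.rec ⟨σ, hσ⟩ (fun _ p =>
      ⟨stepF G (p.1, Classical.choose (hch p.1 p.2)),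
        (Classical.choose_spec (hch p.1 p.2)).2⟩) n with hseqdef
  set inp : ℕ → Fin b → F := fun n => Classical.choose (hch (seq n).1 (seq n).2)
    with hinpdef
  have hseq : ∀ n, (seq (n+1)).1 = stepF G ((seq n).1, inp n) := fun n => rfl
  have hout0 : ∀ n, outF G ((seq n).1, inp n) = 0 := fun n =>
    (Classical.choose_spec (hch (seq n).1 (seq n).2)).1
  set T := degG G with hTdef
  set w : Fin b → PowerSeries F := fun i => PowerSeries.mk fun t =>
    if t < T then (if h : T - t - 1 < rowDeg G i then σ i ⟨T - t - 1, h⟩ else 0)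
    else inp (t - T) i with hwdef
  have hwcoeff_lt : ∀ i (s : Fin (rowDeg G i)),
      PowerSeries.coeff (R := F) (T - ((s : ℕ) + 1)) (w i) = σ i s := by
    intro i s
    have hsT : (s : ℕ) + 1 ≤ T := le_trans s.isLt (rowDeg_le_degG G i)
    rw [hwdef]
    simp only [PowerSeries.coeff_mk]
    rw [if_pos (by omega)]
    have hv : T - (T - ((s : ℕ) + 1)) - 1 = (s : ℕ) := by omega
    rw [dif_pos (by omega)]
    congr 1
    exact Fin.ext (by simpa using hv)
  have hwcoeff_ge : ∀ i m, PowerSeries.coeff (R := F) (T + m) (w i) = inp m i := by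
    intro i m
    rw [hwdef]
    simp only [PowerSeries.coeff_mk]
    rw [if_neg (by omega)]
    congr 1
    omega
  have hstate : ∀ m, stateOf G w (T + m) = (seq m).1 := by
    intro m
    induction m with
    | zero =>
      funext i s
      simp only [stateOf, Nat.add_zero]
      rw [if_pos (le_trans s.isLt (rowDeg_le_degG G i))]
      exact hwcoeff_lt i s
    | succ m ih =>
      have hfun : (fun i => PowerSeries.coeff (R := F) (T + m) (w i)) = inp m :=
        funext fun i => hwcoeff_ge i m
      rw [show T + (m + 1) = (T + m) + 1 by omega, stateOf_succ, ih, hfun, hseq m]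
  have houtw : ∀ t, T ≤ t → ∀ l, PowerSeries.coeff (R := F) t (encode G w l) = 0 := by
    intro t ht l
    rw [show t = T + (t - T) by omega, coeff_encode_eq_out, hstate]
    have : (fun i => PowerSeries.coeff (R := F) (T + (t - T)) (w i)) = inp (t - T) := by
      funext i
      exact hwcoeff_ge i (t - T)
    rw [this]
    rw [congrFun (hout0 (t - T)) l]
    rfl
  obtain ⟨i0, hi0⟩ : ∃ i0, σ i0 ≠ 0 := by
    by_contra hcon
    push_neg at hcon
    exact hσ0 (funext fun i => hcon i)
  obtain ⟨s0, hs0⟩ : ∃ s0, σ i0 s0 ≠ 0 := by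
    by_contra hcon
    push_neg at hcon
    exact hi0 (funext fun s => hcon s)
  exact no_zero_tail G H hGH hrank w T houtw i0 ((s0 : ℕ) + 1) (by omega)
    (by omega) (le_trans s0.isLt (rowDeg_le_degG G i0))
    (by rw [hwcoeff_lt i0 s0]; exact hs0)

theorem Wsub_degG_eq_bot (G : Matrix (Fin b) (Fin c) (Polynomial F))
    (H : Matrix (Fin c) (Fin b) (Polynomial F)) (hGH : G * H = 1)
    (hrank : (highOrder G).rank = b) : Wsub G (degG G) = ⊥ := by
  have hM : Module.finrank F (∀ i : Fin b, Fin (rowDeg G i) → F) = degG G := by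
    rw [Module.finrank_pi_fintype]
    exact Finset.sum_congr rfl fun i _ => Module.finrank_fin_fun F
  have key : ∀ k, Wsub G k = ⊥ ∨ Module.finrank F (Wsub G k) + k ≤ degG G := by
    intro k
    induction k with
    | zero =>
      right
      show Module.finrank F (⊤ : Submodule F (∀ i : Fin b, Fin (rowDeg G i) → F)) + 0 ≤ _
      rw [finrank_top, hM]
      omega
    | succ k ih =>
      rcases ih with h | h
      · left
        exact le_bot_iff.1 (h ▸ Wsub_antitone G k)
      · by_cases heq : Wsub G (k+1) = Wsub G k
        · left
          exact heq.trans (Wsub_stab G H hGH hrank heq)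
        · right
          have hlt : Wsub G (k+1) < Wsub G k := lt_of_le_of_ne (Wsub_antitone G k) heq
          have := Submodule.finrank_lt_finrank_of_lt (K := F) hlt
          omega
  rcases key (degG G) with h | h
  · exact h
  · have : Module.finrank F (Wsub G (degG G)) = 0 := by omega
    exact Submodule.finrank_eq_zero.1 this
theorem key_window (G : Matrix (Fin b) (Fin c) (Polynomial F))
    (H : Matrix (Fin c) (Fin b) (Polynomial F)) (hGH : G * H = 1)
    (hrank : (highOrder G).rank = b)
    (u : Fin b → PowerSeries F) (T : ℕ) (hT : stateNonzero G u T) :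
    ∃ m, m < degG G ∧ ∃ l, PowerSeries.coeff (R := F) (T + m) (encode G u l) ≠ 0 := by
  by_contra hcon
  push_neg at hcon
  have hmem : stateOf G u T ∈ Wsub G (degG G) := by
    apply mem_Wsub_of_zero_output
    intro m hm l
    exact hcon m hm l
  rw [Wsub_degG_eq_bot G H hGH hrank, Submodule.mem_bot] at hmem
  obtain ⟨i, s, hs1, hs2, hs3, hnz⟩ := hT
  apply hnz
  have h1 : stateOf G u T i ⟨s - 1, by omega⟩ = 0 := by rw [hmem]; rfl
  rw [stateOf] at h1
  simp only [] at h1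
  rw [if_pos (by omega : (s - 1) + 1 ≤ T), show T - ((s-1) + 1) = T - s by omega] at h1
  exact h1

theorem seg_zero (G : Matrix (Fin b) (Fin c) (Polynomial F))
    (H : Matrix (Fin c) (Fin b) (Polynomial F)) (hGH : G * H = 1)
    (u : Fin b → PowerSeries F) (h1 : stateNonzero G u 1) :
    ∃ l, PowerSeries.coeff (R := F) 0 (encode G u l) ≠ 0 := by
  classical
  obtain ⟨i, s, hs1, hs2, hs3, hnz⟩ := h1
  have hs : s = 1 := by omega
  rw [hs] at hnz
  simp only [Nat.sub_self] at hnz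
  by_contra hcon
  push_neg at hcon
  set a : Fin b → F := fun i => PowerSeries.coeff (R := F) 0 (u i) with hadef
  set M0 : Matrix (Fin b) (Fin c) F := G.map (Polynomial.evalRingHom 0) with hM0
  set H0 : Matrix (Fin c) (Fin b) F := H.map (Polynomial.evalRingHom 0) with hH0
  have hvm : a ᵥ* M0 = 0 := by
    funext l
    have h2 := hcon l
    rw [coeff_encode_eq_out] at h2
    rw [outF] at h2
    simp only [stateOf] at h2
    have h3 : ∀ i' : Fin b, ∀ s' : Fin (rowDeg G i'),
        (if (s' : ℕ) + 1 ≤ 0 then PowerSeries.coeff (R := F) (0 - ((s' : ℕ)+1)) (u i') else 0) = 0 :=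
      fun i' s' => if_neg (by omega)
    simp only [h3, zero_mul, Finset.sum_const_zero, add_zero] at h2
    rw [Matrix.vecMul, Pi.zero_apply]
    rw [← h2]
    simp only [dotProduct, hM0, Matrix.map_apply, Polynomial.coe_evalRingHom]
    refine Finset.sum_congr rfl fun i' _ => ?_
    rw [← Polynomial.coeff_zero_eq_eval_zero]
  have hinv : M0 * H0 = 1 := by
    rw [hM0, hH0, ← Matrix.map_mul, hGH, Matrix.map_one]
    · exact map_zero _
    · exact map_one _
  have : a = 0 := by
    have h4 : (a ᵥ* M0) ᵥ* H0 = a := by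
      rw [Matrix.vecMul_vecMul, hinv, Matrix.vecMul_one]
    rw [hvm, Matrix.zero_vecMul] at h4
    exact h4.symm
  exact hnz (congrFun this i)

end TDF

/-- for a minimal-basic generator matrix of degree `δ ≥ 1` of a convolutional
code with free distance `d`, one has `T_{dfree}(C) ≤ (d - 1)·δ + 1`; equivalently, every
pair `(u, j)` determining an element of `S_{dfree}` satisfies `j ≤ (d - 1)·δ`. -/

theorem Tdfree_le_of_minimalBasic
    {F : Type*} [Field F] [Fintype F] {b c : ℕ} (hb : 1 ≤ b) (hbc : b < c)
    (G : Matrix (Fin b) (Fin c) (Polynomial F))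
    (hGen : IsGenerator G) (hMB : IsMinimalBasic G) (hδ : 1 ≤ degG G)
    (d : ℕ) (hd : dfree G = (d : ℕ∞)) :
    ∀ (u : Fin b → PowerSeries F) (j : ℕ), 0 < j → SdfreePair G u j →
      j ≤ (d - 1) * degG G := by
  classical
  intro u j hj hS
  obtain ⟨hj0, hwt, hst⟩ := hS
  rw [hd] at hwt
  rcases Nat.eq_zero_or_pos d with hd0 | hd1
  · subst hd0
    rw [Nat.cast_zero] at hwt
    exact absurd hwt (by simp)
  obtain ⟨H, hGH⟩ := hMB.1
  have hrank := hMB.2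
  by_contra hcon
  push_neg at hcon
  have hwin : ∀ T, 1 ≤ T → T ≤ j → ∃ t, T ≤ t ∧ t < T + degG G ∧
      ∃ l, PowerSeries.coeff (R := F) t (encode G u l) ≠ 0 := by
    intro T h1 h2
    obtain ⟨m, hm, l, hl⟩ := TDF.key_window G H hGH hrank u T (hst T h1 h2)
    exact ⟨T + m, by omega, by omega, l, hl⟩
  have hseg0 : ∃ l, PowerSeries.coeff (R := F) 0 (encode G u l) ≠ 0 :=
    TDF.seg_zero G H hGH u (hst 1 le_rfl hj0)
  have hsets : ∀ k, k ≤ d - 1 → ∃ Tset : Finset ℕ, Tset.card = k + 1 ∧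
      (∀ t ∈ Tset, t ≤ k * degG G) ∧
      (∀ t ∈ Tset, t < j ∧ ∃ l, PowerSeries.coeff (R := F) t (encode G u l) ≠ 0) := by
    intro k
    induction k with
    | zero =>
      intro _
      refine ⟨{0}, by simp, by simp, ?_⟩
      intro t ht
      rw [Finset.mem_singleton] at ht
      subst ht
      exact ⟨hj0, hseg0⟩
    | succ k ih =>
      intro hk
      obtain ⟨Tset, hcard, hbound, hmem⟩ := ih (by omega)
      have hkd : (k + 1) * degG G ≤ (d - 1) * degG G :=
        Nat.mul_le_mul_right _ (by omega)
      obtain ⟨t, ht1, ht2, hl⟩ := hwin (k * degG G + 1) (by omega)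
        (by
          have h8 : k * degG G ≤ (d - 1) * degG G :=
            Nat.mul_le_mul_right _ (by omega)
          omega)
      have hmul : (k + 1) * degG G = k * degG G + degG G := by ring
      have htb : t ≤ (k + 1) * degG G := by omega
      have htnew : t ∉ Tset := fun hmem2 => by
        have := hbound t hmem2
        omega
      refine ⟨insert t Tset, ?_, ?_, ?_⟩
      · rw [Finset.card_insert_of_notMem htnew, hcard]
      · intro x hx
        rcases Finset.mem_insert.1 hx with rfl | hx2
        · exact htb
        · have := hbound x hx2
          omega
      · intro x hx
        rcases Finset.mem_insert.1 hx with rfl | hx2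
        · exact ⟨by omega, hl⟩
        · exact hmem x hx2
  obtain ⟨Tset, hcard, _, hmem⟩ := hsets (d - 1) le_rfl
  have hcard' : Tset.card = d := by omega
  have hc0 : 0 < c := by omega
  set f : ℕ → Fin c × ℕ := fun t =>
    (if h : ∃ l, PowerSeries.coeff (R := F) t (encode G u l) ≠ 0 then h.choose else ⟨0, hc0⟩, t)
    with hfdef
  have hfinj : Function.Injective f := fun x y hxy => congrArg Prod.snd hxy
  have himg : ∀ t ∈ Tset, f t ∈ {p : Fin c × ℕ | p.2 < j ∧
      PowerSeries.coeff (R := F) p.2 (encode G u p.1) ≠ 0} := by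
    intro t ht
    obtain ⟨htj, hex⟩ := hmem t ht
    refine ⟨htj, ?_⟩
    rw [hfdef]
    simp only [dif_pos hex]
    exact hex.choose_spec
  have hle : ((d : ℕ) : ℕ∞) ≤ truncWeight (encode G u) j := by
    rw [truncWeight]
    calc ((d : ℕ) : ℕ∞) = ((Tset.image f).card : ℕ∞) := by
          rw [Finset.card_image_of_injective _ hfinj, hcard']
      _ = ((Tset.image f : Finset (Fin c × ℕ)) : Set (Fin c × ℕ)).encard := by
          rw [Set.encard_coe_eq_coe_finsetCard]
      _ ≤ _ := Set.encard_mono (by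
          intro p hp
          rw [Finset.coe_image] at hp
          obtain ⟨t, ht, rfl⟩ := hp
          exact himg t (Finset.mem_coe.1 ht))
  exact absurd hwt (not_lt.2 hle)
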